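/- arXiv:1705.10658 — 2 statements merged into one kernel-verified Lean document; each statement's English description precedes it below -/
import Mathlib

section
/- Every nonzero Q ∈ K⟦x⟧[y] admits, for every d ∈ ℤ, a finite basic root set to precision d. -/
open Polynomial PowerSeries

/-- `Q|_{x=0}` : set `x = 0` in every coefficient. -/
noncomputable def atZero {K : Type*} [Field K] (Q : Polynomial (PowerSeries K)) : Polynomial K :=
  Q.map (PowerSeries.constantCoeff : PowerSeries K →+* K)

/-- `Q(f + x^t y)` : substitute `f + x^t·y` for `y`. -/
noncomputable def shift {K : Type*} [Field K] (Q : Polynomial (PowerSeries K))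
    (f : PowerSeries K) (t : ℕ) : Polynomial (PowerSeries K) :=
  Q.comp (Polynomial.C f + Polynomial.C ((PowerSeries.X : PowerSeries K) ^ t) * Polynomial.X)

/-- `roots(Q, d)`: all of `K⟦x⟧` if `d ≤ 0`, else `{f | Q(f) ≡ 0 mod x^d}`. -/
def seriesRoots {K : Type*} [Field K] (Q : Polynomial (PowerSeries K)) (d : ℤ) :
    Set (PowerSeries K) :=
  {f | 0 < d → (PowerSeries.X : PowerSeries K) ^ d.toNat ∣ Polynomial.eval f Q}

/-- `(F i)ᵢ` is a basic root set of `Q` to precision `d`. -/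
def IsBasicRootSet {K : Type*} [Field K] (Q : Polynomial (PowerSeries K)) (d : ℤ)
    {ι : Type} [Fintype ι] (F : ι → Polynomial K × ℕ) : Prop :=
  if 0 < d then
    (∀ i, Polynomial.C ((PowerSeries.X : PowerSeries K) ^ d.toNat) ∣
        shift Q (((F i).1 : Polynomial K) : PowerSeries K) (F i).2) ∧
    seriesRoots Q d =
      ⋃ i, {g | ∃ h : PowerSeries K,
        g = (((F i).1 : Polynomial K) : PowerSeries K) + (PowerSeries.X : PowerSeries K) ^ (F i).2 * h}
  else Set.range F = {(0, 0)}

/-- the root multiplicity of `(f, t)` in `Q` is `m`. -/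
def HasRootMultiplicity {K : Type*} [Field K] (Q : Polynomial (PowerSeries K))
    (f : Polynomial K) (t : ℕ) (m : ℕ) : Prop :=
  ∃ (g : Polynomial K) (c : K) (s : ℕ) (R : Polynomial (PowerSeries K)),
    f = g + Polynomial.C c * Polynomial.X ^ (t - 1) ∧
    g.degree < ((t - 1 : ℕ) : WithBot ℕ) ∧
    shift Q ((g : Polynomial K) : PowerSeries K) (t - 1)
      = Polynomial.C ((PowerSeries.X : PowerSeries K) ^ s) * R ∧
    atZero R ≠ 0 ∧
    m = (atZero R).rootMultiplicity c

/-- `(F i)ᵢ` is a reduced root set of `Q` to precision `d`. -/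
def IsReducedRootSet {K : Type*} [Field K] (Q : Polynomial (PowerSeries K)) (d : ℤ)
    {ι : Type} [Fintype ι] (F : ι → Polynomial K × ℕ) : Prop :=
  IsBasicRootSet Q d F ∧
  (0 < d → ∃ m : ι → ℕ,
    (∀ i, (F i).1 ≠ 0) ∧
    (∀ i, HasRootMultiplicity Q (F i).1 (F i).2 (m i)) ∧
    (∀ i, 1 ≤ m i) ∧
    (∀ i (s : ℕ) (Qi : Polynomial (PowerSeries K)),
      shift Q (((F i).1 : Polynomial K) : PowerSeries K) (F i).2
        = Polynomial.C ((PowerSeries.X : PowerSeries K) ^ s) * Qi →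
      atZero Qi ≠ 0 → (atZero Qi).natDegree ≤ m i) ∧
    (∑ i, m i) ≤ (atZero Q).natDegree)

section Aux

variable {K : Type*} [Field K]

lemma shift_eval (Q : Polynomial (PowerSeries K)) (f g : PowerSeries K) (t : ℕ) :
    (shift Q f t).eval g = Q.eval (f + (PowerSeries.X : PowerSeries K)^t * g) := by
  simp [shift, eval_comp]

lemma shift_shift (Q : Polynomial (PowerSeries K)) (f g : PowerSeries K) (t u : ℕ) :
    shift (shift Q f t) g u = shift Q (f + (PowerSeries.X:PowerSeries K)^t * g) (t + u) := by
  unfold shift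
  rw [comp_assoc]
  congr 1
  simp only [add_comp, mul_comp, C_comp, X_comp, pow_add, map_add, map_mul]
  ring

lemma shift_zero_zero (Q : Polynomial (PowerSeries K)) : shift Q 0 0 = Q := by
  simp [shift]

lemma shift_ne_zero {Q : Polynomial (PowerSeries K)} (hQ : Q ≠ 0) (f : PowerSeries K) (t : ℕ) :
    shift Q f t ≠ 0 := by
  intro h
  rcases (comp_eq_zero_iff).1 h with h | ⟨-, h⟩
  · exact hQ h
  · have := congrArg (fun p => p.coeff 1) h
    simp only [Polynomial.coeff_add, Polynomial.coeff_C_mul, Polynomial.coeff_X_one, mul_one,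
      Polynomial.coeff_C, if_neg (one_ne_zero), zero_add] at this
    exact pow_ne_zero t PowerSeries.X_ne_zero this

lemma shift_C_mul (a : PowerSeries K) (Q : Polynomial (PowerSeries K)) (f : PowerSeries K) (t : ℕ) :
    shift (Polynomial.C a * Q) f t = Polynomial.C a * shift Q f t := by
  simp [shift, mul_comp]

lemma constCoeff_eval (Q : Polynomial (PowerSeries K)) (f : PowerSeries K) :
    PowerSeries.constantCoeff (Q.eval f) = (atZero Q).eval (PowerSeries.constantCoeff f) := by
  rw [atZero, Polynomial.eval_map, Polynomial.eval, Polynomial.hom_eval₂]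
  rfl

lemma xdvd {a s : ℕ} {z : PowerSeries K} :
    (PowerSeries.X:PowerSeries K)^a ∣ (PowerSeries.X:PowerSeries K)^s * z ↔
      (PowerSeries.X:PowerSeries K)^(a-s) ∣ z := by
  rcases le_or_gt a s with h | h
  · simp only [Nat.sub_eq_zero_of_le h, pow_zero, one_dvd, iff_true]
    exact Dvd.dvd.mul_right (pow_dvd_pow _ h) z
  · obtain ⟨b, rfl⟩ : ∃ b, a = s + b := ⟨a - s, by omega⟩
    rw [pow_add, mul_dvd_mul_iff_left (pow_ne_zero s PowerSeries.X_ne_zero),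
      Nat.add_sub_cancel_left]

lemma exists_factor {Q : Polynomial (PowerSeries K)} (hQ : Q ≠ 0) :
    ∃ s R, Q = Polynomial.C ((PowerSeries.X:PowerSeries K)^s) * R ∧ atZero R ≠ 0 ∧
      (atZero Q = 0 → 1 ≤ s) := by
  classical
  have hex : ∃ n, ∃ k, PowerSeries.coeff n (Q.coeff k) ≠ 0 := by
    obtain ⟨k, hk⟩ : ∃ k, Q.coeff k ≠ 0 := by
      by_contra h
      push_neg at h
      exact hQ (Polynomial.ext fun k => by simp [h k])
    obtain ⟨n, hn⟩ : ∃ n, PowerSeries.coeff n (Q.coeff k) ≠ 0 := by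
      by_contra h
      push_neg at h
      exact hk (PowerSeries.ext h)
    exact ⟨n, k, hn⟩
  set s := Nat.find hex with hs
  have hdvd : Polynomial.C ((PowerSeries.X:PowerSeries K)^s) ∣ Q := by
    rw [Polynomial.C_dvd_iff_dvd_coeff]
    intro k
    rw [PowerSeries.X_pow_dvd_iff]
    intro m hm
    have := Nat.find_min hex hm
    push_neg at this
    exact this k
  obtain ⟨R, hR⟩ := hdvd
  refine ⟨s, R, hR, ?_, ?_⟩
  · obtain ⟨k, hk⟩ := Nat.find_spec hex
    intro h0
    apply hk
    have hck : Q.coeff k = (PowerSeries.X:PowerSeries K)^s * R.coeff k := by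
      rw [hR, Polynomial.coeff_C_mul]
    rw [hck]
    have h2 : PowerSeries.coeff (0 + s) ((PowerSeries.X:PowerSeries K)^s * R.coeff k)
        = PowerSeries.coeff 0 (R.coeff k) := PowerSeries.coeff_X_pow_mul _ _ _
    rw [zero_add] at h2
    rw [h2, PowerSeries.coeff_zero_eq_constantCoeff]
    have h3 : (atZero R).coeff k = 0 := by rw [h0, Polynomial.coeff_zero]
    rwa [atZero, Polynomial.coeff_map] at h3
  · intro hz
    by_contra h
    have hs0 : s = 0 := by omega
    obtain ⟨k, hk⟩ := Nat.find_spec hex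
    rw [← hs, hs0] at hk
    apply hk
    have h3 : (atZero Q).coeff k = 0 := by rw [hz, Polynomial.coeff_zero]
    rw [atZero, Polynomial.coeff_map] at h3
    rwa [PowerSeries.coeff_zero_eq_constantCoeff]

lemma atZero_shift_one (R : Polynomial (PowerSeries K)) (c : K) :
    atZero (shift R ((PowerSeries.C) c) 1) = Polynomial.C ((atZero R).eval c) := by
  unfold atZero shift
  rw [Polynomial.map_comp]
  simp [Polynomial.comp_C]

lemma coe_Cc_add_X_mul (p : Polynomial K) (c : K) :
    ((Polynomial.C c + Polynomial.X * p : Polynomial K) : PowerSeries K)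
      = PowerSeries.C c + PowerSeries.X * (p : PowerSeries K) := by
  push_cast
  simp

lemma helper : ∀ n : ℕ, ∀ Q : Polynomial (PowerSeries K), Q ≠ 0 →
    ∃ L : List (Polynomial K × ℕ),
      (∀ p ∈ L, Polynomial.C ((PowerSeries.X:PowerSeries K)^n) ∣ shift Q (↑p.1) p.2) ∧
      {f : PowerSeries K | (PowerSeries.X:PowerSeries K)^n ∣ Q.eval f} =
        ⋃ p ∈ L, {g : PowerSeries K | ∃ h, g = (↑p.1 : PowerSeries K) + (PowerSeries.X:PowerSeries K)^p.2 * h} := by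
  intro n
  induction n using Nat.strong_induction_on with
  | _ n IH =>
  classical
  intro Q hQ
  rcases Nat.eq_zero_or_pos n with rfl | hn
  · refine ⟨[(0,0)], ?_, ?_⟩
    · intro p hp; simp
    · ext f; simp
  obtain ⟨s, R, hQR, hR0, -⟩ := exists_factor hQ
  have hRne : R ≠ 0 := fun h => hR0 (by simp [h, atZero])
  rcases le_or_gt n s with hns | hsn
  · -- trivial case: everything is a root
    refine ⟨[(0,0)], ?_, ?_⟩
    · intro p hp
      simp only [List.mem_singleton] at hp
      subst hp
      show Polynomial.C ((PowerSeries.X:PowerSeries K)^n) ∣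
        shift Q ((0 : Polynomial K) : PowerSeries K) 0
      rw [Polynomial.coe_zero, shift_zero_zero, hQR]
      exact Dvd.dvd.mul_right (_root_.map_dvd Polynomial.C (pow_dvd_pow _ hns)) _
    · ext f
      simp only [Set.mem_setOf_eq, Set.mem_iUnion]
      constructor
      · intro _
        exact ⟨(0,0), by simp⟩
      · intro _
        rw [hQR, Polynomial.eval_mul, Polynomial.eval_C]
        exact Dvd.dvd.mul_right (pow_dvd_pow _ hns) _
  · -- main case
    set m := n - s with hm
    have hmn : n = s + m := by omega
    have hmpos : 0 < m := by omega
    set rootsF := (atZero R).roots.toFinset with hrootsF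
    have key : ∀ c ∈ rootsF, ∃ L : List (Polynomial K × ℕ),
        (∀ p ∈ L, Polynomial.C ((PowerSeries.X:PowerSeries K)^m) ∣
          shift R ((Polynomial.C c + Polynomial.X * p.1 : Polynomial K) : PowerSeries K) (1 + p.2)) ∧
        ∀ f : PowerSeries K,
          ((PowerSeries.X:PowerSeries K)^m ∣ R.eval (PowerSeries.C c + PowerSeries.X * f)) ↔
          ∃ p ∈ L, ∃ h, f = (↑p.1 : PowerSeries K) + (PowerSeries.X:PowerSeries K)^p.2 * h := by
      intro c hc
      have hroot : (atZero R).eval c = 0 := by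
        rw [Multiset.mem_toFinset, mem_roots hR0] at hc
        exact hc
      set Qc := shift R (PowerSeries.C c) 1 with hQc
      have hQcne : Qc ≠ 0 := shift_ne_zero hRne _ _
      have hQc0 : atZero Qc = 0 := by
        rw [hQc, atZero_shift_one, hroot, map_zero]
      obtain ⟨sc, Rc, hQcR, hRc0, hsc1⟩ := exists_factor hQcne
      have hsc : 1 ≤ sc := hsc1 hQc0
      have hRcne : Rc ≠ 0 := fun h => hRc0 (by simp [h, atZero])
      obtain ⟨L, hL1, hL2⟩ := IH (m - sc) (by omega) Rc hRcne
      refine ⟨L, ?_, ?_⟩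
      · intro p hp
        have heq : shift R ((Polynomial.C c + Polynomial.X * p.1 : Polynomial K) : PowerSeries K) (1 + p.2)
            = Polynomial.C ((PowerSeries.X:PowerSeries K)^sc) * shift Rc (↑p.1) p.2 := by
          have h0 : shift (shift R (PowerSeries.C c) 1) (↑p.1) p.2
              = shift R (PowerSeries.C c + (PowerSeries.X:PowerSeries K)^1 * ↑p.1) (1 + p.2) :=
            shift_shift R _ _ 1 p.2
          rw [pow_one] at h0
          rw [coe_Cc_add_X_mul, ← h0, ← hQc, hQcR, shift_C_mul]
        rw [heq]
        obtain ⟨w, hw⟩ := hL1 p hp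
        rw [hw, ← mul_assoc, ← map_mul, ← pow_add]
        exact Dvd.dvd.mul_right (_root_.map_dvd Polynomial.C (pow_dvd_pow _ (by omega))) _
      · intro f
        have heval : R.eval (PowerSeries.C c + PowerSeries.X * f)
            = (PowerSeries.X:PowerSeries K)^sc * Rc.eval f := by
          have h0 : (shift R (PowerSeries.C c) 1).eval f
              = R.eval (PowerSeries.C c + (PowerSeries.X:PowerSeries K)^1 * f) :=
            shift_eval R _ f 1
          rw [pow_one] at h0
          rw [← h0, ← hQc, hQcR, Polynomial.eval_mul, Polynomial.eval_C]
        rw [heval, xdvd]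
        have := Set.ext_iff.1 hL2 f
        simp only [Set.mem_setOf_eq, Set.mem_iUnion] at this
        rw [this]
        constructor
        · rintro ⟨p, ⟨hp, h, rfl⟩⟩
          exact ⟨p, hp, h, rfl⟩
        · rintro ⟨p, hp, h, rfl⟩
          exact ⟨p, hp, h, rfl⟩
    choose Lf hLf1 hLf2 using key
    refine ⟨rootsF.attach.toList.flatMap (fun c =>
      (Lf c.1 c.2).map (fun p => (Polynomial.C c.1 + Polynomial.X * p.1, 1 + p.2))), ?_, ?_⟩
    · intro p hp
      simp only [List.mem_flatMap, List.mem_map, Finset.mem_toList, Finset.mem_attach,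
        true_and] at hp
      obtain ⟨c, q, hq, rfl⟩ := hp
      have h1 := hLf1 c.1 c.2 q hq
      rw [hQR, shift_C_mul]
      calc Polynomial.C ((PowerSeries.X:PowerSeries K)^n)
          = Polynomial.C ((PowerSeries.X:PowerSeries K)^s)
              * Polynomial.C ((PowerSeries.X:PowerSeries K)^m) := by
            rw [← map_mul, ← pow_add, ← hmn]
        _ ∣ _ := mul_dvd_mul_left _ h1
    · ext f
      have heval : Q.eval f = (PowerSeries.X:PowerSeries K)^s * R.eval f := by
        rw [hQR, Polynomial.eval_mul, Polynomial.eval_C]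
      simp only [Set.mem_setOf_eq, Set.mem_iUnion, heval, xdvd, hmn, Nat.add_sub_cancel_left,
        List.mem_flatMap, List.mem_map, Finset.mem_toList, Finset.mem_attach, true_and]
      constructor
      · intro hf
        set c := PowerSeries.constantCoeff f with hcdef
        have hcroot : (atZero R).eval c = 0 := by
          have h1 : PowerSeries.constantCoeff (R.eval f) = 0 := by
            have : (PowerSeries.X : PowerSeries K) ∣ R.eval f :=
              dvd_trans (dvd_pow_self _ (by omega : m ≠ 0)) hf
            rwa [PowerSeries.X_dvd_iff] at this
          rw [constCoeff_eval] at h1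
          rwa [← hcdef] at h1
        have hcmem : c ∈ rootsF := by
          rw [hrootsF, Multiset.mem_toFinset, mem_roots hR0]
          exact hcroot
        obtain ⟨g, hg⟩ : ∃ g, f = PowerSeries.C c + PowerSeries.X * g := by
          have : (PowerSeries.X : PowerSeries K) ∣ (f - PowerSeries.C c) := by
            rw [PowerSeries.X_dvd_iff, map_sub, PowerSeries.constantCoeff_C, ← hcdef, sub_self]
          obtain ⟨g, hg⟩ := this
          exact ⟨g, by rw [← hg]; ring⟩
        have := (hLf2 c hcmem g).1 (by rw [← hg]; exact hf)
        obtain ⟨p, hp, h, rfl⟩ := this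
        refine ⟨(Polynomial.C c + Polynomial.X * p.1, 1 + p.2), ⟨⟨c, hcmem⟩, p, hp, rfl⟩, h, ?_⟩
        rw [hg, coe_Cc_add_X_mul]
        ring
      · rintro ⟨p, ⟨c, q, hq, rfl⟩, h, rfl⟩
        have heq : ((Polynomial.C c.1 + Polynomial.X * q.1 : Polynomial K) : PowerSeries K)
              + (PowerSeries.X:PowerSeries K)^(1 + q.2) * h
            = PowerSeries.C c.1 + PowerSeries.X
              * ((↑q.1 : PowerSeries K) + (PowerSeries.X:PowerSeries K)^q.2 * h) := by
          rw [coe_Cc_add_X_mul]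
          ring
        rw [heq]
        exact (hLf2 c.1 c.2 _).2 ⟨q, hq, h, rfl⟩

end Aux

/-- every nonzero `Q ∈ K⟦x⟧[y]` admits, for every `d ∈ ℤ`, a finite basic
root set to precision `d`. -/
theorem exists_basic_root_set {K : Type*} [Field K]
    (Q : Polynomial (PowerSeries K)) (hQ : Q ≠ 0) (d : ℤ) :
    ∃ (ℓ : ℕ) (F : Fin ℓ → Polynomial K × ℕ), IsBasicRootSet Q d F := by
  rcases lt_or_ge 0 d with hd | hd
  · obtain ⟨L, hL1, hL2⟩ := helper d.toNat Q hQ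
    refine ⟨L.length, fun i => L.get i, ?_⟩
    rw [IsBasicRootSet, if_pos hd]
    constructor
    · intro i
      exact hL1 _ (L.get_mem i)
    · have hroots : seriesRoots Q d = {f | (PowerSeries.X:PowerSeries K)^d.toNat ∣ Q.eval f} := by
        ext f; simp [seriesRoots, hd]
      rw [hroots, hL2]
      ext f
      simp only [Set.mem_iUnion]
      constructor
      · rintro ⟨p, hp, hf⟩
        obtain ⟨i, rfl⟩ := List.mem_iff_get.1 hp
        exact ⟨i, hf⟩
      · rintro ⟨i, hf⟩
        exact ⟨L.get i, L.get_mem i, hf⟩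
  · refine ⟨1, fun _ => (0, 0), ?_⟩
    rw [IsBasicRootSet, if_neg (by omega)]
    simp [Set.range_const]
end

section
/- Let Q ∈ K⟦x⟧[y] with Q|x=0 ≠ 0, and let A ∈ K⟦x⟧[y] be its affine factor. Then for every d ∈ ℤ, any reduced root set of A to precision d is also a reduced root set of Q to precision d. -/
open Polynomial PowerSeries

section Aux16
variable {K : Type*} [Field K]

lemma shift_mul16 (A B : Polynomial (PowerSeries K)) (f : PowerSeries K) (t : ℕ) :
    shift (A * B) f t = shift A f t * shift B f t := Polynomial.mul_comp _ _ _

lemma atZero_mul16 (A B : Polynomial (PowerSeries K)) :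
    atZero (A * B) = atZero A * atZero B := Polynomial.map_mul _

lemma atZero_shift_const16 (B : Polynomial (PowerSeries K)) {c : K}
    (hB : atZero B = Polynomial.C c) (f : PowerSeries K) (t : ℕ) :
    atZero (shift B f t) = Polynomial.C c := by
  rw [shift, atZero, Polynomial.map_comp, ← atZero, hB, Polynomial.C_comp]

lemma constCoeff_eval16 (B : Polynomial (PowerSeries K)) (f : PowerSeries K) :
    (PowerSeries.constantCoeff : PowerSeries K →+* K) (Polynomial.eval f B)
      = (atZero B).eval ((PowerSeries.constantCoeff : PowerSeries K →+* K) f) := by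
  rw [atZero, Polynomial.eval_map, Polynomial.eval₂_eq_sum, Polynomial.eval_eq_sum,
    Polynomial.sum_def, Polynomial.sum_def, map_sum]
  simp [map_mul, map_pow]

lemma CX_dvd_of_atZero_eq_zero16 {P : Polynomial (PowerSeries K)} (h : atZero P = 0) :
    Polynomial.C (PowerSeries.X : PowerSeries K) ∣ P := by
  rw [Polynomial.C_dvd_iff_dvd_coeff]
  intro i
  rw [PowerSeries.X_dvd_iff]
  have := congrArg (fun p => Polynomial.coeff p i) h
  simpa [atZero, Polynomial.coeff_map] using this

lemma factor_out16 {R : Polynomial (PowerSeries K)} (hR : atZero R ≠ 0) :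
    ∀ (s : ℕ) (P Qi : Polynomial (PowerSeries K)),
      P * R = Polynomial.C ((PowerSeries.X : PowerSeries K) ^ s) * Qi →
      ∃ P', P = Polynomial.C ((PowerSeries.X : PowerSeries K) ^ s) * P' ∧ P' * R = Qi := by
  intro s
  induction s with
  | zero => intro P Qi h; exact ⟨P, by simp, by simpa using h⟩
  | succ s ih =>
    intro P Qi h
    have hz : atZero P = 0 := by
      have := congrArg atZero h
      rw [atZero_mul16, atZero_mul16] at this
      have hC : atZero (Polynomial.C ((PowerSeries.X : PowerSeries K) ^ (s + 1))) = 0 := by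
        simp [atZero, Polynomial.map_C]
      rw [hC, zero_mul] at this
      exact (mul_eq_zero.mp this).resolve_right hR
    obtain ⟨P₂, hP₂⟩ := CX_dvd_of_atZero_eq_zero16 hz
    have hCX : (Polynomial.C (PowerSeries.X : PowerSeries K)) ≠ 0 :=
      Polynomial.C_ne_zero.mpr PowerSeries.X_ne_zero
    have hcancel : P₂ * R = Polynomial.C ((PowerSeries.X : PowerSeries K) ^ s) * Qi := by
      apply mul_left_cancel₀ hCX
      rw [← mul_assoc, ← hP₂, h, pow_succ, mul_comm ((PowerSeries.X : PowerSeries K) ^ s),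
        map_mul, mul_assoc]
    obtain ⟨P', h1, h2⟩ := ih P₂ Qi hcancel
    exact ⟨P', by rw [hP₂, h1, ← mul_assoc, ← map_mul, ← pow_succ'], h2⟩

end Aux16

/-- any reduced root set of the affine factor `A` of `Q` to precision `d`
is also a reduced root set of `Q` to precision `d`. -/
theorem reduced_root_set_affine_factor {K : Type*} [Field K]
    (Q A B : Polynomial (PowerSeries K)) (h0 : atZero Q ≠ 0)
    (hQ : Q = A * B) (hA : A.Monic)
    (hB : ∃ c : K, c ≠ 0 ∧ atZero B = Polynomial.C c)
    (d : ℤ) (ℓ : ℕ) (F : Fin ℓ → Polynomial K × ℕ)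
    (hF : IsReducedRootSet A d F) :
    IsReducedRootSet Q d F := by
  obtain ⟨c, hc, hBc⟩ := hB
  have hCc : (Polynomial.C c : Polynomial K) ≠ 0 := Polynomial.C_ne_zero.mpr hc
  obtain ⟨hbasic, hred⟩ := hF
  constructor
  · -- basic root set
    unfold IsBasicRootSet at hbasic ⊢
    by_cases hd : 0 < d
    · rw [if_pos hd] at hbasic ⊢
      obtain ⟨hdvd, hroots⟩ := hbasic
      refine ⟨fun i => by rw [hQ, shift_mul16]; exact (hdvd i).mul_right _, ?_⟩
      rw [← hroots]
      ext f
      simp only [seriesRoots, Set.mem_setOf_eq]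
      have hu : IsUnit (Polynomial.eval f B) := by
        rw [PowerSeries.isUnit_iff_constantCoeff, constCoeff_eval16, hBc, Polynomial.eval_C]
        exact isUnit_iff_ne_zero.mpr hc
      constructor
      · intro h hd'
        have := h hd'
        rw [hQ, Polynomial.eval_mul] at this
        exact (IsUnit.dvd_mul_right hu).mp this
      · intro h hd'
        rw [hQ, Polynomial.eval_mul]
        exact (h hd').mul_right _
    · rw [if_neg hd] at hbasic ⊢; exact hbasic
  · -- reduced conditions
    intro hd
    obtain ⟨m, h1, h2, h3, h4, h5⟩ := hred hd
    refine ⟨m, h1, ?_, h3, ?_, ?_⟩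
    · intro i
      obtain ⟨g, cc, s, R, e1, e2, e3, e4, e5⟩ := h2 i
      have hne : atZero R * Polynomial.C c ≠ 0 := mul_ne_zero e4 hCc
      refine ⟨g, cc, s, R * shift B ((g : Polynomial K) : PowerSeries K) ((F i).2 - 1),
        e1, e2, ?_, ?_, ?_⟩
      · rw [hQ, shift_mul16, e3, mul_assoc]
      · rw [atZero_mul16, atZero_shift_const16 B hBc]; exact hne
      · have hcz : Polynomial.rootMultiplicity cc (Polynomial.C c) = 0 :=
          Polynomial.rootMultiplicity_eq_zero
            (fun h => hc (by simpa [Polynomial.IsRoot] using h))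
        rw [atZero_mul16, atZero_shift_const16 B hBc,
          Polynomial.rootMultiplicity_mul hne, hcz, add_zero]
        exact e5
    · intro i s Qi hshift hQi
      rw [hQ, shift_mul16] at hshift
      have hBsh : atZero (shift B (((F i).1 : Polynomial K) : PowerSeries K) (F i).2) ≠ 0 := by
        rw [atZero_shift_const16 B hBc]; exact hCc
      obtain ⟨Ai, hAi, hmul⟩ := factor_out16 hBsh s _ Qi hshift
      have hAt : atZero Ai * Polynomial.C c = atZero Qi := by
        rw [← hmul, atZero_mul16, atZero_shift_const16 B hBc]
      have hAine : atZero Ai ≠ 0 := fun h => hQi (by rw [← hAt, h, zero_mul])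
      have hdeg : (atZero Qi).natDegree = (atZero Ai).natDegree := by
        rw [← hAt, Polynomial.natDegree_mul hAine hCc, Polynomial.natDegree_C, add_zero]
      rw [hdeg]
      exact h4 i s Ai hAi hAine
    · have hQz : atZero Q = atZero A * Polynomial.C c := by
        rw [hQ, atZero_mul16, hBc]
      have hAne : atZero A ≠ 0 := by
        intro h; exact h0 (by rw [hQz, h, zero_mul])
      have : (atZero Q).natDegree = (atZero A).natDegree := by
        rw [hQz, Polynomial.natDegree_mul hAne hCc, Polynomial.natDegree_C, add_zero]
      rw [this]
      exact h5
end
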